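/- Let α > 0, β > 0, 0 < ε ≤ 1/2, G₁ ≥ 0, and let {g_t}_{t=0}^∞ be a sequence of real numbers with 0 ≤ g_t ≤ G₁ for all t. Define adaptive step sizes η_t = α / (β + ∑_{s=0}^{t−1} g_s²)^{(1/2)+ε} for t ≥ 0 (with the empty sum equal to 0 when t = 0). Then ∑_{t=0}^∞ η_t² g_t² ≤ α²/(2ε·β^{2ε}) + G₁²·α²/β^{1+2ε}; in particular, the series ∑_{t=0}^∞ η_t² g_t² converges. -/

import Mathlib

open Real Finset

/-- Bernoulli-type inequality: for `0 < p ≤ 1` and `0 < x ≤ y`,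
`p * (y - x) * y ^ (-(1+p)) ≤ x ^ (-p) - y ^ (-p)`. -/
lemma aux_bernoulli {p x y : ℝ} (hp : 0 < p) (hp1 : p ≤ 1) (hx : 0 < x) (hxy : x ≤ y) :
    p * (y - x) * y ^ (-(1 + p)) ≤ x ^ (-p) - y ^ (-p) := by
  have hy : 0 < y := hx.trans_le hxy
  set t : ℝ := x / y with ht_def
  have ht : 0 < t := div_pos hx hy
  have ht1 : t ≤ 1 := (div_le_one hy).2 hxy
  -- Bernoulli: t ^ p ≤ 1 + p * (t - 1)
  have hb : t ^ p ≤ 1 + p * (t - 1) := by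
    have h := rpow_one_add_le_one_add_mul_self (s := t - 1) (by linarith) hp.le hp1
    rw [show (1 : ℝ) + (t - 1) = t by ring] at h
    linarith
  have hu : 0 ≤ p * (1 - t) := mul_nonneg hp.le (by linarith)
  have hu1 : p * (1 - t) ≤ 1 - t := by nlinarith
  have hpos : 0 < 1 - p * (1 - t) := by linarith
  -- t ^ (-p) ≥ 1 + p * (1 - t)
  have htp : 0 < t ^ p := Real.rpow_pos_of_pos ht p
  have hinv : (1 : ℝ) + p * (1 - t) ≤ (t ^ p)⁻¹ := by
    rw [← one_div, le_div_iff₀ htp]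
    nlinarith
  have hneg : t ^ (-p) = (t ^ p)⁻¹ := Real.rpow_neg ht.le p
  -- expand x ^ (-p) = t ^ (-p) * y ^ (-p)
  have hx_eq : x ^ (-p) = t ^ (-p) * y ^ (-p) := by
    have hyne : y ^ (-p) ≠ 0 := (Real.rpow_pos_of_pos hy _).ne'
    rw [ht_def, Real.div_rpow hx.le hy.le]
    field_simp [Real.rpow_neg hx.le, Real.rpow_neg hy.le]
  have hyp : 0 < y ^ (-p) := Real.rpow_pos_of_pos hy _
  have hsplit : y ^ (-(1 + p)) = y⁻¹ * y ^ (-p) := by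
    rw [show -(1 + p) = -1 + -p by ring, Real.rpow_add hy, Real.rpow_neg_one]
  have h1t : (1 - t) = (y - x) / y := by field_simp [ht_def]; rw [ht_def, sub_mul, div_mul_cancel₀ x hy.ne']; ring
  have : (1 + p * (1 - t)) * y ^ (-p) ≤ x ^ (-p) := by
    rw [hx_eq, hneg]
    exact mul_le_mul_of_nonneg_right hinv hyp.le
  have hkey : y ^ (-p) + p * (y - x) * (y⁻¹ * y ^ (-p)) ≤ x ^ (-p) := by
    calc y ^ (-p) + p * (y - x) * (y⁻¹ * y ^ (-p))
        = (1 + p * (1 - t)) * y ^ (-p) := by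
          rw [h1t]; field_simp
      _ ≤ x ^ (-p) := this
  rw [hsplit]; linarith

theorem stmt_2 (α β ε G₁ : ℝ) (hα : 0 < α) (hβ : 0 < β) (hε : 0 < ε) (hε' : ε ≤ 1 / 2)
    (hG₁ : 0 ≤ G₁) (g : ℕ → ℝ) (hg : ∀ t, 0 ≤ g t) (hgG : ∀ t, g t ≤ G₁)
    (η : ℕ → ℝ)
    (hη : ∀ t, η t = α / (β + ∑ s ∈ Finset.range t, g s ^ 2) ^ ((1 : ℝ) / 2 + ε)) :
    Summable (fun t => η t ^ 2 * g t ^ 2) ∧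
      ∑' t, η t ^ 2 * g t ^ 2 ≤ α ^ 2 / (2 * ε * β ^ (2 * ε)) + G₁ ^ 2 * α ^ 2 / β ^ (1 + 2 * ε) := by
  set S : ℕ → ℝ := fun t => β + ∑ s ∈ Finset.range t, g s ^ 2 with hS_def
  have hS0 : S 0 = β := by simp [hS_def]
  have hSpos : ∀ t, 0 < S t := fun t =>
    add_pos_of_pos_of_nonneg hβ (Finset.sum_nonneg fun s _ => sq_nonneg _)
  have hSstep : ∀ t, S (t + 1) = S t + g t ^ 2 := by
    intro t; simp [hS_def, Finset.sum_range_succ]; ring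
  have hSle : ∀ t, S t ≤ S (t + 1) := fun t => by
    rw [hSstep]; nlinarith [sq_nonneg (g t)]
  have hβS : ∀ t, β ≤ S t := by
    intro t
    induction t with
    | zero => simp [hS0]
    | succ n ih => exact ih.trans (hSle n)
  -- rewrite η t ^ 2 * g t ^ 2
  have hterm : ∀ t, η t ^ 2 * g t ^ 2 = α ^ 2 * (g t ^ 2 * S t ^ (-(1 + 2 * ε))) := by
    intro t
    have h1 : (S t ^ ((1 : ℝ) / 2 + ε)) ^ 2 = S t ^ (1 + 2 * ε) := by
      rw [← Real.rpow_natCast (S t ^ ((1 : ℝ) / 2 + ε)) 2, ← Real.rpow_mul (hSpos t).le]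
      norm_num; ring_nf
    have h2 : S t ^ (-(1 + 2 * ε)) = (S t ^ (1 + 2 * ε))⁻¹ := Real.rpow_neg (hSpos t).le _
    have hηt : η t = α / S t ^ ((1 : ℝ) / 2 + ε) := hη t
    have hne : S t ^ (1 + 2 * ε) ≠ 0 := (Real.rpow_pos_of_pos (hSpos t) _).ne'
    rw [hηt, div_pow, h1, h2]
    field_simp
  -- per-term bound
  have hper : ∀ t, η t ^ 2 * g t ^ 2 ≤
      α ^ 2 * ((1 / (2 * ε)) * (S t ^ (-(2 * ε)) - S (t + 1) ^ (-(2 * ε)))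
        + G₁ ^ 2 * (S t ^ (-(1 + 2 * ε)) - S (t + 1) ^ (-(1 + 2 * ε)))) := by
    intro t
    rw [hterm]
    apply mul_le_mul_of_nonneg_left _ (sq_nonneg α)
    have h2ε : 0 < 2 * ε := by linarith
    have hberra := aux_bernoulli (p := 2 * ε) (x := S t) (y := S (t + 1)) h2ε
      (by linarith) (hSpos t) (hSle t)
    have hys : S (t + 1) - S t = g t ^ 2 := by rw [hSstep]; ring
    -- first part: g t ^ 2 * S (t+1) ^ (-(1+2ε)) ≤ (1/(2ε)) * (...)
    rw [hys] at hberra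
    have hpart1 : g t ^ 2 * S (t + 1) ^ (-(1 + 2 * ε)) ≤
        (1 / (2 * ε)) * (S t ^ (-(2 * ε)) - S (t + 1) ^ (-(2 * ε))) := by
      rw [one_div, inv_mul_eq_div, le_div_iff₀ h2ε]
      nlinarith [hberra]
    -- second part
    have hdiff : S (t + 1) ^ (-(1 + 2 * ε)) ≤ S t ^ (-(1 + 2 * ε)) :=
      Real.rpow_le_rpow_of_nonpos (hSpos t) (hSle t) (by linarith)
    have hgsq : g t ^ 2 ≤ G₁ ^ 2 := by nlinarith [hg t, hgG t]
    have hpart2 : g t ^ 2 * (S t ^ (-(1 + 2 * ε)) - S (t + 1) ^ (-(1 + 2 * ε))) ≤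
        G₁ ^ 2 * (S t ^ (-(1 + 2 * ε)) - S (t + 1) ^ (-(1 + 2 * ε))) :=
      mul_le_mul_of_nonneg_right hgsq (by linarith)
    nlinarith [hpart1, hpart2]
  -- partial sums bounded
  set C : ℝ := α ^ 2 / (2 * ε * β ^ (2 * ε)) + G₁ ^ 2 * α ^ 2 / β ^ (1 + 2 * ε) with hC_def
  have hkey : ∀ n, ∑ t ∈ Finset.range n, η t ^ 2 * g t ^ 2 ≤ C := by
    intro n
    calc ∑ t ∈ Finset.range n, η t ^ 2 * g t ^ 2
        ≤ ∑ t ∈ Finset.range n, α ^ 2 * ((1 / (2 * ε)) * (S t ^ (-(2 * ε)) - S (t + 1) ^ (-(2 * ε)))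
            + G₁ ^ 2 * (S t ^ (-(1 + 2 * ε)) - S (t + 1) ^ (-(1 + 2 * ε)))) :=
          Finset.sum_le_sum fun t _ => hper t
      _ = α ^ 2 * ((1 / (2 * ε)) * (S 0 ^ (-(2 * ε)) - S n ^ (-(2 * ε)))
            + G₁ ^ 2 * (S 0 ^ (-(1 + 2 * ε)) - S n ^ (-(1 + 2 * ε)))) := by
          rw [← Finset.mul_sum, Finset.sum_add_distrib, ← Finset.mul_sum, ← Finset.mul_sum,
            Finset.sum_range_sub' (fun t => S t ^ (-(2 * ε))),
            Finset.sum_range_sub' (fun t => S t ^ (-(1 + 2 * ε)))]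
      _ ≤ C := by
          have hb1 : S 0 ^ (-(2 * ε)) = (β ^ (2 * ε))⁻¹ := by
            rw [hS0, Real.rpow_neg hβ.le]
          have hb2 : S 0 ^ (-(1 + 2 * ε)) = (β ^ (1 + 2 * ε))⁻¹ := by
            rw [hS0, Real.rpow_neg hβ.le]
          have hn1 : 0 < S n ^ (-(2 * ε)) := Real.rpow_pos_of_pos (hSpos n) _
          have hn2 : 0 < S n ^ (-(1 + 2 * ε)) := Real.rpow_pos_of_pos (hSpos n) _
          have hβ1 : 0 < β ^ (2 * ε) := Real.rpow_pos_of_pos hβ _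
          have hβ2 : 0 < β ^ (1 + 2 * ε) := Real.rpow_pos_of_pos hβ _
          rw [hC_def, hb1, hb2, mul_add]
          have e1 : α ^ 2 * ((1 / (2 * ε)) * ((β ^ (2 * ε))⁻¹ - S n ^ (-(2 * ε)))) ≤
              α ^ 2 / (2 * ε * β ^ (2 * ε)) := by
            calc α ^ 2 * ((1 / (2 * ε)) * ((β ^ (2 * ε))⁻¹ - S n ^ (-(2 * ε))))
                ≤ α ^ 2 * ((1 / (2 * ε)) * (β ^ (2 * ε))⁻¹) := by
                  apply mul_le_mul_of_nonneg_left _ (sq_nonneg α)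
                  apply mul_le_mul_of_nonneg_left _ (by positivity)
                  linarith
              _ = α ^ 2 / (2 * ε * β ^ (2 * ε)) := by
                  rw [div_eq_mul_inv, mul_inv]; ring
          have e2 : α ^ 2 * (G₁ ^ 2 * ((β ^ (1 + 2 * ε))⁻¹ - S n ^ (-(1 + 2 * ε)))) ≤
              G₁ ^ 2 * α ^ 2 / β ^ (1 + 2 * ε) := by
            calc α ^ 2 * (G₁ ^ 2 * ((β ^ (1 + 2 * ε))⁻¹ - S n ^ (-(1 + 2 * ε))))
                ≤ α ^ 2 * (G₁ ^ 2 * (β ^ (1 + 2 * ε))⁻¹) := by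
                  apply mul_le_mul_of_nonneg_left _ (sq_nonneg α)
                  apply mul_le_mul_of_nonneg_left _ (sq_nonneg G₁)
                  linarith
              _ = G₁ ^ 2 * α ^ 2 / β ^ (1 + 2 * ε) := by
                  rw [div_eq_mul_inv]; ring
          exact add_le_add e1 e2
  have hnn : ∀ t, 0 ≤ η t ^ 2 * g t ^ 2 := fun t => by positivity
  have hsum : Summable (fun t => η t ^ 2 * g t ^ 2) :=
    summable_of_sum_range_le hnn hkey
  exact ⟨hsum, Real.tsum_le_of_sum_range_le hnn hkey⟩
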